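/- Let π be a probability distribution on {1,…,m} with π(i) > 0 for all i and with π log-concave in i, i.e. π(i)² ≥ π(i−1)π(i+1) for all i (with the convention π(0) = π(m+1) = 0). Let M be the Markov chain on {1,…,m} with transition probabilities P(i,j) = (1/4)·min{1, π(j)/π(i)} whenever |i−j| = 1 and 1 ≤ j ≤ m, P(i,j) = 0 whenever |i−j| > 1, and self-loop probabilities P(i,i) making each row sum to 1. Let r = min_{1≤i≤m} (π(i−1) + π(i+1))/π(i). Then there is a universal constant C such that the mixing time of M satisfies τ(ε) ≤ C·(m²/r)·log(1/ε) for all ε ∈ (0,1/2); in particular τ(ε) = O(m²/r) for fixed ε. -/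

import Mathlib

open Finset

/-- The Metropolis birth-death chain on `{1, …, m}` (states encoded as
`i : Fin m` ↦ `i+1`) for the distribution `π`:
`P(i,j) = (1/4) min{1, π(j)/π(i)}` when `|i-j| = 1`, `P(i,j) = 0` when
`|i-j| > 1`, and the self-loop probabilities make each row sum to `1`. -/
noncomputable def bdChain (m : ℕ) (π : ℕ → ℝ) : Matrix (Fin m) (Fin m) ℝ :=
  fun i j =>
    if i = j then
      1 - ∑ l : Fin m, (if l = i then 0 else
        if (i : ℕ) + 1 = (l : ℕ) ∨ (l : ℕ) + 1 = (i : ℕ) then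
          (1/4) * min 1 (π ((l : ℕ) + 1) / π ((i : ℕ) + 1)) else 0)
    else if (i : ℕ) + 1 = (j : ℕ) ∨ (j : ℕ) + 1 = (i : ℕ) then
      (1/4) * min 1 (π ((j : ℕ) + 1) / π ((i : ℕ) + 1))
    else 0

/-- The mixing time `τ(ε)` of a chain with transition matrix `P` and stationary
distribution `π`: the least `t` such that for all `s ≥ t` the total variation
distance from `π`, started from any state, is less than `ε`. -/
noncomputable def mixingTime {n : Type*} [Fintype n] [DecidableEq n]
    (P : Matrix n n ℝ) (π : n → ℝ) (ε : ℝ) : ℕ :=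
  sInf {t : ℕ | ∀ s : ℕ, t ≤ s → ∀ x : n, (1/2) * ∑ y : n, |(P ^ s) x y - π y| < ε}

namespace BD

variable {m : ℕ} {π : ℕ → ℝ}

def Hpos (m : ℕ) (π : ℕ → ℝ) : Prop := ∀ i : ℕ, 1 ≤ i → i ≤ m → 0 < π i
def Hzero (m : ℕ) (π : ℕ → ℝ) : Prop := ∀ i : ℕ, i = 0 ∨ m < i → π i = 0
def Hlc (m : ℕ) (π : ℕ → ℝ) : Prop := ∀ i : ℕ, 1 ≤ i → i ≤ m → π (i-1) * π (i+1) ≤ (π i)^2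

lemma pi_nonneg (h1 : Hpos m π) (h2 : Hzero m π) (i : ℕ) : 0 ≤ π i := by
  rcases Nat.eq_zero_or_pos i with h | h
  · exact le_of_eq (h2 i (Or.inl h)).symm
  · by_cases him : i ≤ m
    · exact (h1 i h him).le
    · exact le_of_eq (h2 i (Or.inr (not_le.mp him))).symm

def fsucc (x : Fin m) : Fin m := if h : (x:ℕ)+1 < m then ⟨(x:ℕ)+1, h⟩ else x
def fpred (x : Fin m) : Fin m := ⟨(x:ℕ) - 1, lt_of_le_of_lt (Nat.pred_le _) x.isLt⟩

lemma fsucc_val (x : Fin m) (h : (x:ℕ)+1 < m) : ((fsucc x : Fin m) : ℕ) = (x:ℕ)+1 := by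
  simp [fsucc, h]

lemma fpred_val (x : Fin m) : ((fpred x : Fin m) : ℕ) = (x:ℕ) - 1 := rfl

noncomputable def Uf (π : ℕ → ℝ) (x : Fin m) : ℝ := (1/4) * min 1 (π ((x:ℕ)+2) / π ((x:ℕ)+1))
noncomputable def Df (π : ℕ → ℝ) (x : Fin m) : ℝ := (1/4) * min 1 (π (x:ℕ) / π ((x:ℕ)+1))

lemma Uf_nonneg (h1 : Hpos m π) (h2 : Hzero m π) (x : Fin m) : 0 ≤ Uf π x := by
  have := pi_nonneg h1 h2 ((x:ℕ)+2); have := pi_nonneg h1 h2 ((x:ℕ)+1)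
  have : (0:ℝ) ≤ π ((x:ℕ)+2) / π ((x:ℕ)+1) := by positivity
  simp only [Uf]; positivity

lemma Df_nonneg (h1 : Hpos m π) (h2 : Hzero m π) (x : Fin m) : 0 ≤ Df π x := by
  have : (0:ℝ) ≤ π (x:ℕ) / π ((x:ℕ)+1) := by
    have := pi_nonneg h1 h2 (x:ℕ); have := pi_nonneg h1 h2 ((x:ℕ)+1); positivity
  simp only [Df]; positivity

lemma Uf_le (x : Fin m) : Uf π x ≤ 1/4 := by
  simp only [Uf]
  nlinarith [min_le_left (1:ℝ) (π ((x:ℕ)+2) / π ((x:ℕ)+1))]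

lemma Df_le (x : Fin m) : Df π x ≤ 1/4 := by
  simp only [Df]
  nlinarith [min_le_left (1:ℝ) (π (x:ℕ) / π ((x:ℕ)+1))]

lemma Uf_boundary (h2 : Hzero m π) (x : Fin m) (h : ¬ ((x:ℕ)+1 < m)) : Uf π x = 0 := by
  have hx : (x:ℕ) < m := x.isLt
  have : π ((x:ℕ)+2) = 0 := h2 _ (Or.inr (by omega))
  simp [Uf, this]

lemma Df_boundary (x : Fin m) (h2 : Hzero m π) (h : ¬ (0 < (x:ℕ))) : Df π x = 0 := by
  have hx : (x:ℕ) = 0 := by omega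
  have : π (x:ℕ) = 0 := by rw [hx]; exact h2 0 (Or.inl rfl)
  simp [Df, this]

lemma sum_if_val (k : ℕ) (c : Fin m → ℝ) :
    ∑ l : Fin m, (if (l:ℕ) = k then c l else 0) = if h : k < m then c ⟨k, h⟩ else 0 := by
  by_cases h : k < m
  · rw [dif_pos h, Finset.sum_eq_single ⟨k, h⟩]
    · simp
    · intro l _ hl
      rw [if_neg]
      intro hc; exact hl (Fin.ext hc)
    · intro habs; exact absurd (Finset.mem_univ _) habs
  · rw [dif_neg h]
    apply Finset.sum_eq_zero
    intro l _
    rw [if_neg]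
    intro hc; exact h (hc ▸ l.isLt)

lemma sum_adj (x : Fin m) (c : Fin m → ℝ) :
    (∑ l : Fin m, if l = x then 0 else
        if (x:ℕ)+1 = (l:ℕ) ∨ (l:ℕ)+1 = (x:ℕ) then c l else 0)
      = (if (x:ℕ)+1 < m then c (fsucc x) else 0)
        + (if 0 < (x:ℕ) then c (fpred x) else 0) := by
  have key : ∀ l : Fin m,
      (if l = x then (0:ℝ) else if (x:ℕ)+1 = (l:ℕ) ∨ (l:ℕ)+1 = (x:ℕ) then c l else 0)
      = (if (l:ℕ) = (x:ℕ)+1 then c l else 0) + (if (l:ℕ) = (x:ℕ)-1 ∧ 0 < (x:ℕ) then c l else 0) := by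
    intro l
    by_cases hlx : l = x
    · subst hlx
      rw [if_pos rfl, if_neg (by omega), if_neg (by omega)]
      norm_num
    · have hvx : (l:ℕ) ≠ (x:ℕ) := fun hc => hlx (Fin.ext hc)
      rw [if_neg hlx]
      by_cases h1 : (x:ℕ)+1 = (l:ℕ)
      · rw [if_pos (Or.inl h1), if_pos (by omega), if_neg (by omega)]; ring
      · by_cases h2 : (l:ℕ)+1 = (x:ℕ)
        · rw [if_pos (Or.inr h2), if_neg (by omega), if_pos (by omega)]; ring
        · rw [if_neg (by tauto), if_neg (by omega), if_neg (by omega)]; norm_num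
  rw [Finset.sum_congr rfl (fun l _ => key l), Finset.sum_add_distrib]
  congr 1
  · rw [sum_if_val ((x:ℕ)+1) c]
    by_cases h : (x:ℕ)+1 < m
    · rw [dif_pos h, if_pos h]
      congr 1
      exact Fin.ext (fsucc_val x h).symm
    · rw [dif_neg h, if_neg h]
  · by_cases hx : 0 < (x:ℕ)
    · have : ∀ l : Fin m, (if (l:ℕ) = (x:ℕ)-1 ∧ 0 < (x:ℕ) then c l else 0)
          = (if (l:ℕ) = (x:ℕ)-1 then c l else 0) := by
        intro l; by_cases h : (l:ℕ) = (x:ℕ)-1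
        · rw [if_pos ⟨h, hx⟩, if_pos h]
        · rw [if_neg (by tauto), if_neg h]
      rw [Finset.sum_congr rfl (fun l _ => this l), sum_if_val ((x:ℕ)-1) c,
        dif_pos (show (x:ℕ)-1 < m from lt_of_le_of_lt (Nat.pred_le _) x.isLt), if_pos hx]
      rfl
    · rw [if_neg hx]
      apply Finset.sum_eq_zero
      intro l _
      rw [if_neg (by tauto)]

lemma sum_adj_eval (h2 : Hzero m π) (x : Fin m) :
    (∑ l : Fin m, if l = x then 0 else
        if (x:ℕ)+1 = (l:ℕ) ∨ (l:ℕ)+1 = (x:ℕ) then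
          (1/4) * min 1 (π ((l:ℕ)+1) / π ((x:ℕ)+1)) else 0)
      = Uf π x + Df π x := by
  rw [sum_adj x (fun l => (1/4) * min 1 (π ((l:ℕ)+1) / π ((x:ℕ)+1)))]
  congr 1
  · by_cases h : (x:ℕ)+1 < m
    · rw [if_pos h, fsucc_val x h]; rfl
    · rw [if_neg h, Uf_boundary h2 x h]
  · by_cases h : 0 < (x:ℕ)
    · rw [if_pos h, fpred_val]
      have : (x:ℕ) - 1 + 1 = (x:ℕ) := by omega
      rw [this]; rfl
    · rw [if_neg h, Df_boundary x h2 h]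

lemma P_diag (h2 : Hzero m π) (x : Fin m) :
    bdChain m π x x = 1 - Uf π x - Df π x := by
  rw [bdChain, if_pos rfl, sum_adj_eval h2 x]; ring

lemma P_diag_half (h1 : Hpos m π) (h2 : Hzero m π) (x : Fin m) :
    (1/2 : ℝ) ≤ bdChain m π x x := by
  rw [P_diag h2 x]
  have := Uf_le (π := π) x; have := Df_le (π := π) x
  linarith

lemma P_nonneg (h1 : Hpos m π) (h2 : Hzero m π) (x j : Fin m) :
    0 ≤ bdChain m π x j := by
  by_cases hxy : x = j
  · subst hxy; linarith [P_diag_half h1 h2 x]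
  · rw [bdChain, if_neg hxy]
    by_cases h : (x:ℕ)+1 = (j:ℕ) ∨ (j:ℕ)+1 = (x:ℕ)
    · rw [if_pos h]
      have h01 : (0:ℝ) ≤ π ((j:ℕ)+1) / π ((x:ℕ)+1) := by
        have := pi_nonneg h1 h2 ((j:ℕ)+1); have := pi_nonneg h1 h2 ((x:ℕ)+1); positivity
      have : (0:ℝ) ≤ min 1 (π ((j:ℕ)+1) / π ((x:ℕ)+1)) := le_min (by norm_num) h01
      linarith
    · rw [if_neg h]

lemma P_row (h2 : Hzero m π) (x : Fin m) (f : Fin m → ℝ) :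
    ∑ j : Fin m, bdChain m π x j * f j
      = f x + Uf π x * (f (fsucc x) - f x) + Df π x * (f (fpred x) - f x) := by
  have key : ∀ j : Fin m, bdChain m π x j * f j
      = (if j = x then (bdChain m π x x) * f x - 0 else 0)
        + (if j = x then 0 else
            if (x:ℕ)+1 = (j:ℕ) ∨ (j:ℕ)+1 = (x:ℕ) then
              ((1/4) * min 1 (π ((j:ℕ)+1) / π ((x:ℕ)+1))) * f j else 0) := by
    intro j
    by_cases hjx : j = x
    · subst hjx; rw [if_pos rfl, if_pos rfl]; ring
    · rw [if_neg hjx, if_neg hjx, bdChain, if_neg (fun hc => hjx hc.symm)]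
      by_cases h : (x:ℕ)+1 = (j:ℕ) ∨ (j:ℕ)+1 = (x:ℕ)
      · rw [if_pos h, if_pos h]; ring
      · rw [if_neg h, if_neg h]; ring
  rw [Finset.sum_congr rfl (fun j _ => key j), Finset.sum_add_distrib,
    Finset.sum_ite_eq' Finset.univ x (fun j => bdChain m π x x * f x - 0),
    if_pos (Finset.mem_univ x),
    sum_adj x (fun l => ((1/4) * min 1 (π ((l:ℕ)+1) / π ((x:ℕ)+1))) * f l)]
  have e1 : (if (x:ℕ)+1 < m then
        ((1/4) * min 1 (π (((fsucc x : Fin m):ℕ)+1) / π ((x:ℕ)+1))) * f (fsucc x) else 0)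
      = Uf π x * f (fsucc x) := by
    by_cases h : (x:ℕ)+1 < m
    · rw [if_pos h, fsucc_val x h]; rfl
    · rw [if_neg h, Uf_boundary h2 x h, zero_mul]
  have e2 : (if 0 < (x:ℕ) then
        ((1/4) * min 1 (π (((fpred x : Fin m):ℕ)+1) / π ((x:ℕ)+1))) * f (fpred x) else 0)
      = Df π x * f (fpred x) := by
    by_cases h : 0 < (x:ℕ)
    · rw [if_pos h, fpred_val]
      have hv : (x:ℕ) - 1 + 1 = (x:ℕ) := by omega
      rw [hv]; rfl
    · rw [if_neg h, Df_boundary x h2 h, zero_mul]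
  rw [e1, e2, P_diag h2 x]
  ring

lemma P_rowsum (h2 : Hzero m π) (x : Fin m) :
    ∑ j : Fin m, bdChain m π x j = 1 := by
  have := P_row h2 x (fun _ => (1:ℝ))
  simpa using this
lemma rev (h1 : Hpos m π) (h2 : Hzero m π) (x y : Fin m) :
    π ((x:ℕ)+1) * bdChain m π x y = π ((y:ℕ)+1) * bdChain m π y x := by
  by_cases hxy : x = y
  · subst hxy; rfl
  · have hyx : y ≠ x := fun hc => hxy hc.symm
    have hx : 0 < π ((x:ℕ)+1) := h1 _ (by omega) (by have := x.isLt; omega)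
    have hy : 0 < π ((y:ℕ)+1) := h1 _ (by omega) (by have := y.isLt; omega)
    have key : ∀ a b : ℝ, 0 < a → 0 < b → a * ((1/4) * min 1 (b/a)) = (1/4) * min a b := by
      intro a b ha hb
      rw [mul_left_comm]
      congr 1
      rw [mul_min_of_nonneg _ _ ha.le, mul_one, mul_div_cancel₀ _ (ne_of_gt ha)]
    rw [bdChain, bdChain, if_neg hxy, if_neg hyx]
    by_cases h : (x:ℕ)+1 = (y:ℕ) ∨ (y:ℕ)+1 = (x:ℕ)
    · rw [if_pos h, if_pos (by tauto)]
      rw [key _ _ hx hy, key _ _ hy hx, min_comm]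
    · rw [if_neg h, if_neg (by tauto), mul_zero, mul_zero]

lemma stationary (h1 : Hpos m π) (h2 : Hzero m π) (y : Fin m) :
    ∑ x : Fin m, π ((x:ℕ)+1) * bdChain m π x y = π ((y:ℕ)+1) := by
  calc ∑ x : Fin m, π ((x:ℕ)+1) * bdChain m π x y
      = ∑ x : Fin m, π ((y:ℕ)+1) * bdChain m π y x :=
        Finset.sum_congr rfl (fun x _ => rev h1 h2 x y)
    _ = π ((y:ℕ)+1) * ∑ x : Fin m, bdChain m π y x := by rw [Finset.mul_sum]
    _ = π ((y:ℕ)+1) := by rw [P_rowsum h2 y, mul_one]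

lemma ratio_up (h1 : Hpos m π) (h2 : Hzero m π) (hlc : Hlc m π) (s : ℕ) (hs : 1 ≤ s) :
    ∀ t, s ≤ t → t ≤ m → π (t+1) * π s ≤ π (s+1) * π t := by
  intro t hst
  induction t, hst using Nat.le_induction with
  | base => intro _; exact le_refl _
  | succ t hst ih =>
    intro htm
    have htm' : t ≤ m := by omega
    have iht := ih htm'
    have hlct : π t * π (t+2) ≤ (π (t+1))^2 := by
      have := hlc (t+1) (by omega) htm
      simpa using this
    have hpt1 : 0 < π (t+1) := h1 _ (by omega) htm
    have hnn2 : 0 ≤ π (t+2) := pi_nonneg h1 h2 _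
    have hnns1 : 0 ≤ π (s+1) := pi_nonneg h1 h2 _
    have c1 : π (t+2) * (π (t+1) * π s) ≤ π (t+2) * (π (s+1) * π t) :=
      mul_le_mul_of_nonneg_left iht hnn2
    have c2 : π (s+1) * (π t * π (t+2)) ≤ π (s+1) * (π (t+1))^2 :=
      mul_le_mul_of_nonneg_left hlct hnns1
    have step : (π (t+2) * π s) * π (t+1) ≤ (π (s+1) * π (t+1)) * π (t+1) := by nlinarith
    exact (mul_le_mul_iff_of_pos_right hpt1).mp step

lemma ratio_down (h1 : Hpos m π) (h2 : Hzero m π) (hlc : Hlc m π) (s : ℕ) (hs : 1 ≤ s) :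
    ∀ t, s ≤ t → t ≤ m → π (s-1) * π t ≤ π (t-1) * π s := by
  rcases eq_or_lt_of_le hs with he | hs2
  · intro t _ htm
    have hs0 : s - 1 = 0 := by omega
    rw [hs0, h2 0 (Or.inl rfl), zero_mul]
    exact mul_nonneg (pi_nonneg h1 h2 _) (pi_nonneg h1 h2 _)
  · intro t hst
    induction t, hst using Nat.le_induction with
    | base => intro _; exact le_refl _
    | succ t hst ih =>
      intro htm
      have htm' : t ≤ m := by omega
      have iht := ih htm'
      have hlct : π (t-1) * π (t+1) ≤ (π t)^2 := hlc t (by omega) htm'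
      have hptm : 0 < π (t-1) := h1 _ (by omega) (by omega)
      have hpt : 0 < π t := h1 _ (by omega) htm'
      have hnns : 0 ≤ π (s-1) := pi_nonneg h1 h2 _
      have hnnps : 0 ≤ π s := pi_nonneg h1 h2 _
      have c1 : π (s-1) * (π (t-1) * π (t+1)) ≤ π (s-1) * (π t)^2 :=
        mul_le_mul_of_nonneg_left hlct hnns
      have c2 : π t * (π (s-1) * π t) ≤ π t * (π (t-1) * π s) :=
        mul_le_mul_of_nonneg_left iht hpt.le
      have step : (π (s-1) * π (t+1)) * π (t-1) ≤ (π t * π s) * π (t-1) := by nlinarith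
      have := (mul_le_mul_iff_of_pos_right hptm).mp step
      have hgoal : π (s-1) * π (t+1-1) ≤ π (t+1-1) * π s → True := fun _ => trivial
      simpa [Nat.add_sub_cancel] using this
lemma Uf_mono (h1 : Hpos m π) (h2 : Hzero m π) (hlc : Hlc m π) (x y : Fin m)
    (hxy : (x:ℕ) < (y:ℕ)) : Uf π y ≤ Uf π x := by
  have hx : 0 < π ((x:ℕ)+1) := h1 _ (by omega) (by have := x.isLt; omega)
  have hy : 0 < π ((y:ℕ)+1) := h1 _ (by omega) (by have := y.isLt; omega)
  have key := ratio_up h1 h2 hlc ((x:ℕ)+1) (by omega) ((y:ℕ)+1) (by omega)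
    (by have := y.isLt; omega)
  have hdiv : π ((y:ℕ)+2) / π ((y:ℕ)+1) ≤ π ((x:ℕ)+2) / π ((x:ℕ)+1) := by
    rw [div_le_div_iff₀ hy hx]
    calc π ((y:ℕ)+2) * π ((x:ℕ)+1) = π (((y:ℕ)+1)+1) * π ((x:ℕ)+1) := by ring_nf
      _ ≤ π (((x:ℕ)+1)+1) * π ((y:ℕ)+1) := key
      _ = π ((x:ℕ)+2) * π ((y:ℕ)+1) := by ring_nf
  exact mul_le_mul_of_nonneg_left (min_le_min (le_refl 1) hdiv) (by norm_num)

lemma Df_mono (h1 : Hpos m π) (h2 : Hzero m π) (hlc : Hlc m π) (x y : Fin m)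
    (hxy : (x:ℕ) < (y:ℕ)) : Df π x ≤ Df π y := by
  have hx : 0 < π ((x:ℕ)+1) := h1 _ (by omega) (by have := x.isLt; omega)
  have hy : 0 < π ((y:ℕ)+1) := h1 _ (by omega) (by have := y.isLt; omega)
  have key := ratio_down h1 h2 hlc ((x:ℕ)+1) (by omega) ((y:ℕ)+1) (by omega)
    (by have := y.isLt; omega)
  have hdiv : π (x:ℕ) / π ((x:ℕ)+1) ≤ π (y:ℕ) / π ((y:ℕ)+1) := by
    rw [div_le_div_iff₀ hx hy]
    calc π (x:ℕ) * π ((y:ℕ)+1) = π (((x:ℕ)+1)-1) * π ((y:ℕ)+1) := by norm_num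
      _ ≤ π (((y:ℕ)+1)-1) * π ((x:ℕ)+1) := key
      _ = π (y:ℕ) * π ((x:ℕ)+1) := by norm_num
  exact mul_le_mul_of_nonneg_left (min_le_min (le_refl 1) hdiv) (by norm_num)

/-- the quantity `r` -/
noncomputable def rmin (m : ℕ) (π : ℕ → ℝ) (hm : 1 ≤ m) : ℝ :=
  (Finset.Icc 1 m).inf' (Finset.nonempty_Icc.mpr hm) (fun i => (π (i - 1) + π (i + 1)) / π i)

lemma min_one_add (u v : ℝ) (hu : 0 ≤ u) (hv : 0 ≤ v) :
    min 1 (u + v) ≤ min 1 u + min 1 v := by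
  rcases le_total 1 u with h | h
  · have : min 1 u = 1 := min_eq_left h
    rw [this]
    have : min 1 (u+v) ≤ 1 := min_le_left _ _
    have : 0 ≤ min 1 v := le_min (by norm_num) hv
    linarith [min_le_left (1:ℝ) (u+v)]
  · rcases le_total 1 v with h' | h'
    · have : 0 ≤ min 1 u := le_min (by norm_num) hu
      have h2 : min 1 v = 1 := min_eq_left h'
      rw [h2]
      linarith [min_le_left (1:ℝ) (u+v)]
    · rw [min_eq_right h, min_eq_right h']
      exact min_le_right _ _

lemma move_ge (hm : 1 ≤ m) (h1 : Hpos m π) (h2 : Hzero m π) (x : Fin m) :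
    (1/4) * min 1 (rmin m π hm) ≤ Uf π x + Df π x := by
  set s : ℕ := (x:ℕ)+1 with hs
  have hsm : s ≤ m := by have := x.isLt; omega
  have hps : 0 < π s := h1 _ (by omega) hsm
  have hinf : rmin m π hm ≤ (π (s-1) + π (s+1)) / π s :=
    Finset.inf'_le _ (by simp [Finset.mem_Icc]; omega)
  have hu : 0 ≤ π (s+1) / π s := div_nonneg (pi_nonneg h1 h2 _) hps.le
  have hv : 0 ≤ π (s-1) / π s := div_nonneg (pi_nonneg h1 h2 _) hps.le
  have hsum : π (s+1) / π s + π (s-1) / π s = (π (s-1) + π (s+1)) / π s := by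
    rw [← add_div]; ring_nf
  have hmin : min 1 (rmin m π hm) ≤ min 1 (π (s+1) / π s) + min 1 (π (s-1) / π s) := by
    calc min 1 (rmin m π hm) ≤ min 1 ((π (s-1) + π (s+1)) / π s) :=
          min_le_min (le_refl 1) hinf
      _ = min 1 (π (s+1) / π s + π (s-1) / π s) := by rw [hsum]
      _ ≤ _ := min_one_add _ _ hu hv
  have hU : Uf π x = (1/4) * min 1 (π (s+1) / π s) := by
    norm_num [Uf, hs]
  have hD : Df π x = (1/4) * min 1 (π (s-1) / π s) := by
    norm_num [Df, hs]
  rw [hU, hD]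
  linarith

lemma rmin_le_two (hm : 1 ≤ m) (h1 : Hpos m π) (h2 : Hzero m π) :
    rmin m π hm ≤ 2 := by
  obtain ⟨i, hi, hmax⟩ := Finset.exists_max_image (Finset.Icc 1 m) π
    (Finset.nonempty_Icc.mpr hm)
  rw [Finset.mem_Icc] at hi
  have hpi : 0 < π i := h1 i hi.1 hi.2
  have ha : π (i-1) ≤ π i := by
    by_cases h : 1 ≤ i - 1
    · exact hmax _ (Finset.mem_Icc.mpr ⟨h, by omega⟩)
    · have : i - 1 = 0 := by omega
      rw [this, h2 0 (Or.inl rfl)]; exact hpi.le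
  have hb : π (i+1) ≤ π i := by
    by_cases h : i + 1 ≤ m
    · exact hmax _ (Finset.mem_Icc.mpr ⟨by omega, h⟩)
    · rw [h2 (i+1) (Or.inr (by omega))]; exact hpi.le
  have : (π (i-1) + π (i+1)) / π i ≤ 2 := by
    rw [div_le_iff₀ hpi]; linarith
  exact le_trans (Finset.inf'_le _ (Finset.mem_Icc.mpr hi)) this

lemma rmin_pos (hm : 1 ≤ m) (hm2 : 2 ≤ m) (h1 : Hpos m π) (h2 : Hzero m π) :
    0 < rmin m π hm := by
  rw [rmin, Finset.lt_inf'_iff]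
  intro i hi
  rw [Finset.mem_Icc] at hi
  have hpi : 0 < π i := h1 i hi.1 hi.2
  apply div_pos _ hpi
  rcases Nat.lt_or_ge i 2 with h | h
  · have hi1 : i = 1 := by omega
    have : 0 < π (i+1) := by rw [hi1]; exact h1 2 (by omega) hm2
    have := pi_nonneg h1 h2 (i-1)
    linarith
  · have : 0 < π (i-1) := h1 (i-1) (by omega) (by omega)
    have := pi_nonneg h1 h2 (i+1)
    linarith

lemma rmin_nonneg (hm : 1 ≤ m) (h1 : Hpos m π) (h2 : Hzero m π) :
    0 ≤ rmin m π hm := by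
  apply Finset.le_inf'
  intro i hi
  rw [Finset.mem_Icc] at hi
  exact div_nonneg (by linarith [pi_nonneg h1 h2 (i-1), pi_nonneg h1 h2 (i+1)])
    (h1 i hi.1 hi.2).le

lemma delta_nonneg (hm : 1 ≤ m) (h1 : Hpos m π) (h2 : Hzero m π) :
    0 ≤ (1/2) * min 1 (rmin m π hm) := by
  have := rmin_nonneg hm h1 h2
  have : 0 ≤ min 1 (rmin m π hm) := le_min (by norm_num) this
  linarith
/-- The coupling kernel: one chain moves at a time; equal chains move together. -/
noncomputable def cK (m : ℕ) (π : ℕ → ℝ) :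
    Matrix (Fin m × Fin m) (Fin m × Fin m) ℝ := fun p p' =>
  if p.1 = p.2 then (if p'.1 = p'.2 then bdChain m π p.1 p'.1 else 0)
  else if p'.2 = p.2 ∧ p'.1 ≠ p.1 then bdChain m π p.1 p'.1
  else if p'.1 = p.1 ∧ p'.2 ≠ p.2 then bdChain m π p.2 p'.2
  else if p'.1 = p.1 ∧ p'.2 = p.2 then bdChain m π p.1 p.1 + bdChain m π p.2 p.2 - 1
  else 0

lemma cK_nonneg (h1 : Hpos m π) (h2 : Hzero m π) (p p' : Fin m × Fin m) :
    0 ≤ cK m π p p' := by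
  rw [cK]
  split_ifs with h a b c
  · exact P_nonneg h1 h2 _ _
  · norm_num
  · exact P_nonneg h1 h2 _ _
  · exact P_nonneg h1 h2 _ _
  · linarith [P_diag_half h1 h2 p.1, P_diag_half h1 h2 p.2]
  · norm_num

lemma cK_expand (p : Fin m × Fin m) (hp : p.1 ≠ p.2) (F : Fin m × Fin m → ℝ)
    (p' : Fin m × Fin m) :
    cK m π p p' * F p'
      = (if p'.2 = p.2 then bdChain m π p.1 p'.1 * F (p'.1, p.2) else 0)
        + (if p'.1 = p.1 then bdChain m π p.2 p'.2 * F (p.1, p'.2) else 0)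
        - (if p'.1 = p.1 ∧ p'.2 = p.2 then F p else 0) := by
  obtain ⟨x, y⟩ := p
  obtain ⟨a, b⟩ := p'
  simp only at hp ⊢
  rw [cK]
  simp only
  rw [if_neg hp]
  by_cases hb : b = y
  · subst hb
    by_cases ha : a = x
    · subst ha
      rw [if_neg (by tauto), if_neg (by tauto), if_pos ⟨rfl, rfl⟩,
        if_pos rfl, if_pos rfl, if_pos ⟨rfl, rfl⟩]
      ring
    · rw [if_pos ⟨rfl, ha⟩, if_pos rfl, if_neg ha, if_neg (by tauto)]
      ring
  · by_cases ha : a = x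
    · subst ha
      rw [if_neg (by tauto), if_pos ⟨rfl, hb⟩, if_neg hb, if_pos rfl, if_neg (by tauto)]
      ring
    · rw [if_neg (by tauto), if_neg (by tauto), if_neg (by tauto),
        if_neg hb, if_neg ha, if_neg (by tauto)]
      ring

lemma cK_row (p : Fin m × Fin m) (hp : p.1 ≠ p.2) (F : Fin m × Fin m → ℝ) :
    ∑ p' : Fin m × Fin m, cK m π p p' * F p'
      = (∑ a : Fin m, bdChain m π p.1 a * F (a, p.2))
        + (∑ b : Fin m, bdChain m π p.2 b * F (p.1, b)) - F p := by
  rw [Finset.sum_congr rfl (fun p' _ => cK_expand p hp F p')]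
  rw [Finset.sum_sub_distrib, Finset.sum_add_distrib]
  congr 1
  · congr 1
    · rw [Fintype.sum_prod_type]
      apply Finset.sum_congr rfl
      intro a _
      rw [Finset.sum_ite_eq' Finset.univ p.2 (fun _ => bdChain m π p.1 a * F (a, p.2))]
      rw [if_pos (Finset.mem_univ _)]
    · rw [Fintype.sum_prod_type]
      rw [Finset.sum_eq_single p.1]
      · apply Finset.sum_congr rfl
        intro b _
        rw [if_pos rfl]
      · intro a _ ha
        apply Finset.sum_eq_zero
        intro b _
        rw [if_neg ha]
      · intro h; exact absurd (Finset.mem_univ _) h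
  · rw [Fintype.sum_prod_type]
    rw [Finset.sum_eq_single p.1]
    · rw [Finset.sum_eq_single p.2]
      · rw [if_pos ⟨rfl, rfl⟩]
      · intro b _ hb; rw [if_neg (by tauto)]
      · intro h; exact absurd (Finset.mem_univ _) h
    · intro a _ ha
      apply Finset.sum_eq_zero
      intro b _
      rw [if_neg (by tauto)]
    · intro h; exact absurd (Finset.mem_univ _) h
lemma cK_diag_row (p : Fin m × Fin m) (hp : p.1 = p.2) (F : Fin m × Fin m → ℝ) :
    ∑ p' : Fin m × Fin m, cK m π p p' * F p'
      = ∑ a : Fin m, bdChain m π p.1 a * F (a, a) := by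
  rw [Fintype.sum_prod_type]
  apply Finset.sum_congr rfl
  intro a _
  rw [Finset.sum_eq_single a]
  · rw [cK, if_pos hp, if_pos rfl]
  · intro b _ hb
    rw [cK, if_pos hp, if_neg (by simpa using fun hc => hb hc.symm), zero_mul]
  · intro h; exact absurd (Finset.mem_univ _) h

lemma cK_marg1 (h2 : Hzero m π) (p : Fin m × Fin m) (a : Fin m) :
    ∑ b : Fin m, cK m π p (a, b) = bdChain m π p.1 a := by
  by_cases hp : p.1 = p.2
  · have : ∀ b : Fin m, cK m π p (a, b) = if b = a then bdChain m π p.1 a else 0 := by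
      intro b
      by_cases hba : b = a
      · subst hba; simp [cK, hp]
      · rw [cK, if_pos hp, if_neg (by simpa using fun hc => hba hc.symm), if_neg hba]
    rw [Finset.sum_congr rfl (fun b _ => this b), Finset.sum_ite_eq' Finset.univ a
      (fun _ => bdChain m π p.1 a), if_pos (Finset.mem_univ _)]
  · by_cases ha : a = p.1
    · subst ha
      have : ∀ b : Fin m, cK m π p (p.1, b)
          = (if b = p.2 then bdChain m π p.1 p.1 + bdChain m π p.2 p.2 - 1 else
              bdChain m π p.2 b) := by
        intro b
        rw [cK, if_neg hp]
        by_cases hb : b = p.2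
        · subst hb
          rw [if_neg (by tauto), if_neg (by tauto), if_pos ⟨rfl, rfl⟩, if_pos rfl]
        · rw [if_neg (by tauto), if_pos ⟨rfl, hb⟩, if_neg hb]
      rw [Finset.sum_congr rfl (fun b _ => this b)]
      have split : ∀ b : Fin m,
          (if b = p.2 then bdChain m π p.1 p.1 + bdChain m π p.2 p.2 - 1 else
              bdChain m π p.2 b)
          = bdChain m π p.2 b + (if b = p.2 then bdChain m π p.1 p.1 - 1 else 0) := by
        intro b
        by_cases hb : b = p.2
        · subst hb; rw [if_pos rfl, if_pos rfl]; ring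
        · rw [if_neg hb, if_neg hb]; ring
      rw [Finset.sum_congr rfl (fun b _ => split b), Finset.sum_add_distrib,
        P_rowsum h2, Finset.sum_ite_eq' Finset.univ p.2
          (fun _ => bdChain m π p.1 p.1 - 1), if_pos (Finset.mem_univ _)]
      ring
    · have : ∀ b : Fin m, cK m π p (a, b)
          = if b = p.2 then bdChain m π p.1 a else 0 := by
        intro b
        rw [cK, if_neg hp]
        by_cases hb : b = p.2
        · subst hb; rw [if_pos ⟨rfl, ha⟩, if_pos rfl]
        · rw [if_neg (by tauto), if_neg (by tauto), if_neg (by tauto), if_neg hb]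
      rw [Finset.sum_congr rfl (fun b _ => this b), Finset.sum_ite_eq' Finset.univ p.2
        (fun _ => bdChain m π p.1 a), if_pos (Finset.mem_univ _)]
lemma cK_swap (x y a b : Fin m) : cK m π (x,y) (a,b) = cK m π (y,x) (b,a) := by
  unfold cK
  dsimp only
  split_ifs <;> first | tauto | (subst_vars; ring)

lemma cK_marg2 (h2 : Hzero m π) (p : Fin m × Fin m) (b : Fin m) :
    ∑ a : Fin m, cK m π p (a, b) = bdChain m π p.2 b := by
  have key : ∀ a : Fin m, cK m π p (a,b) = cK m π (p.2, p.1) (b, a) := by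
    intro a
    have := cK_swap (π := π) p.1 p.2 a b
    simpa using this
  rw [Finset.sum_congr rfl (fun a _ => key a)]
  exact cK_marg1 h2 (p.2, p.1) b

lemma cK_rowsum (h2 : Hzero m π) (p : Fin m × Fin m) :
    ∑ p' : Fin m × Fin m, cK m π p p' = 1 := by
  rw [Fintype.sum_prod_type]
  calc ∑ a : Fin m, ∑ b : Fin m, cK m π p (a, b)
      = ∑ a : Fin m, bdChain m π p.1 a :=
        Finset.sum_congr rfl (fun a _ => cK_marg1 h2 p a)
    _ = 1 := P_rowsum h2 p.1

lemma sum_one_mul {α : Type*} [Fintype α] [DecidableEq α] (p : α) (F : α → ℝ) :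
    ∑ p' : α, (1 : Matrix α α ℝ) p p' * F p' = F p := by
  rw [Finset.sum_eq_single p]
  · rw [Matrix.one_apply_eq, one_mul]
  · intro q _ hq; rw [Matrix.one_apply_ne (fun hc => hq hc.symm), zero_mul]
  · intro h; exact absurd (Finset.mem_univ _) h

lemma cKpow_nonneg (h1 : Hpos m π) (h2 : Hzero m π) (s : ℕ) (p p' : Fin m × Fin m) :
    0 ≤ ((cK m π)^s) p p' := by
  induction s generalizing p p' with
  | zero =>
    rw [pow_zero]
    by_cases hpp : p = p'
    · subst hpp; rw [Matrix.one_apply_eq]; norm_num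
    · rw [Matrix.one_apply_ne hpp]
  | succ s ih =>
    rw [pow_succ, Matrix.mul_apply]
    exact Finset.sum_nonneg (fun c _ => mul_nonneg (ih p c) (cK_nonneg h1 h2 c p'))

lemma cKpow_rowsum (h2 : Hzero m π) (s : ℕ) (p : Fin m × Fin m) :
    ∑ p' : Fin m × Fin m, ((cK m π)^s) p p' = 1 := by
  induction s generalizing p with
  | zero =>
    rw [pow_zero]
    rw [Finset.sum_eq_single p]
    · exact Matrix.one_apply_eq p
    · intro q _ hq; exact Matrix.one_apply_ne (fun hc => hq hc.symm)
    · intro h; exact absurd (Finset.mem_univ _) h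
  | succ s ih =>
    rw [pow_succ]
    have e1 : ∀ p' : Fin m × Fin m, ((cK m π)^s * cK m π) p p'
        = ∑ c : Fin m × Fin m, ((cK m π)^s) p c * cK m π c p' :=
      fun p' => Matrix.mul_apply
    rw [Finset.sum_congr rfl (fun p' _ => e1 p'), Finset.sum_comm]
    have e2 : ∀ c : Fin m × Fin m,
        ∑ p' : Fin m × Fin m, ((cK m π)^s) p c * cK m π c p' = ((cK m π)^s) p c := by
      intro c; rw [← Finset.mul_sum, cK_rowsum h2, mul_one]
    rw [Finset.sum_congr rfl (fun c _ => e2 c)]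
    exact ih p

lemma pow_zero_marg (p : Fin m × Fin m) (a c : Fin m) :
    ∑ b : Fin m, (1 : Matrix (Fin m × Fin m) (Fin m × Fin m) ℝ) p (a, b)
      = (1 : Matrix (Fin m) (Fin m) ℝ) p.1 a := by
  by_cases hpa : p.1 = a
  · rw [Finset.sum_eq_single p.2]
    · have : p = (a, p.2) := Prod.ext hpa rfl
      rw [← this, Matrix.one_apply_eq, ← hpa, Matrix.one_apply_eq]
    · intro b _ hb
      apply Matrix.one_apply_ne
      intro hc; exact hb (congrArg Prod.snd hc).symm
    · intro h; exact absurd (Finset.mem_univ _) h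
  · rw [Matrix.one_apply_ne hpa]
    apply Finset.sum_eq_zero
    intro b _
    apply Matrix.one_apply_ne
    intro hc; exact hpa (congrArg Prod.fst hc)

lemma cKpow_marg1 (h2 : Hzero m π) (s : ℕ) (p : Fin m × Fin m) (a : Fin m) :
    ∑ b : Fin m, ((cK m π)^s) p (a, b) = ((bdChain m π)^s) p.1 a := by
  induction s generalizing p a with
  | zero => rw [pow_zero, pow_zero]; exact pow_zero_marg p a p.1
  | succ s ih =>
    rw [pow_succ, pow_succ]
    have e1 : ∀ b : Fin m, ((cK m π)^s * cK m π) p (a, b)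
        = ∑ c : Fin m × Fin m, ((cK m π)^s) p c * cK m π c (a, b) :=
      fun b => Matrix.mul_apply
    rw [Finset.sum_congr rfl (fun b _ => e1 b), Finset.sum_comm]
    have e2 : ∀ c : Fin m × Fin m,
        ∑ b : Fin m, ((cK m π)^s) p c * cK m π c (a, b)
          = ((cK m π)^s) p c * bdChain m π c.1 a := by
      intro c; rw [← Finset.mul_sum, cK_marg1 h2]
    rw [Finset.sum_congr rfl (fun c _ => e2 c), Matrix.mul_apply, Fintype.sum_prod_type]
    apply Finset.sum_congr rfl
    intro c1 _
    dsimp only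
    rw [← Finset.sum_mul, ih p c1]

lemma pow_zero_marg2 (p : Fin m × Fin m) (b : Fin m) :
    ∑ a : Fin m, (1 : Matrix (Fin m × Fin m) (Fin m × Fin m) ℝ) p (a, b)
      = (1 : Matrix (Fin m) (Fin m) ℝ) p.2 b := by
  by_cases hpb : p.2 = b
  · rw [Finset.sum_eq_single p.1]
    · have : p = (p.1, b) := Prod.ext rfl hpb
      rw [← this, Matrix.one_apply_eq, ← hpb, Matrix.one_apply_eq]
    · intro a _ ha
      apply Matrix.one_apply_ne
      intro hc; exact ha (congrArg Prod.fst hc).symm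
    · intro h; exact absurd (Finset.mem_univ _) h
  · rw [Matrix.one_apply_ne hpb]
    apply Finset.sum_eq_zero
    intro a _
    apply Matrix.one_apply_ne
    intro hc; exact hpb (congrArg Prod.snd hc)

lemma cKpow_marg2 (h2 : Hzero m π) (s : ℕ) (p : Fin m × Fin m) (b : Fin m) :
    ∑ a : Fin m, ((cK m π)^s) p (a, b) = ((bdChain m π)^s) p.2 b := by
  induction s generalizing p b with
  | zero => rw [pow_zero, pow_zero]; exact pow_zero_marg2 p b
  | succ s ih =>
    rw [pow_succ, pow_succ]
    have e1 : ∀ a : Fin m, ((cK m π)^s * cK m π) p (a, b)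
        = ∑ c : Fin m × Fin m, ((cK m π)^s) p c * cK m π c (a, b) :=
      fun a => Matrix.mul_apply
    rw [Finset.sum_congr rfl (fun a _ => e1 a), Finset.sum_comm]
    have e2 : ∀ c : Fin m × Fin m,
        ∑ a : Fin m, ((cK m π)^s) p c * cK m π c (a, b)
          = ((cK m π)^s) p c * bdChain m π c.2 b := by
      intro c; rw [← Finset.mul_sum, cK_marg2 h2]
    rw [Finset.sum_congr rfl (fun c _ => e2 c), Matrix.mul_apply,
      Fintype.sum_prod_type_right]
    apply Finset.sum_congr rfl
    intro c2 _
    dsimp only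
    rw [← Finset.sum_mul, ih p c2]

lemma cKpow_absorb (s : ℕ) (p p' : Fin m × Fin m) (hp : p.1 = p.2) (hp' : p'.1 ≠ p'.2) :
    ((cK m π)^s) p p' = 0 := by
  induction s generalizing p with
  | zero =>
    rw [pow_zero, Matrix.one_apply_ne]
    intro hc; subst hc; exact hp' hp
  | succ s ih =>
    rw [pow_succ', Matrix.mul_apply]
    apply Finset.sum_eq_zero
    intro c _
    by_cases hc : c.1 = c.2
    · rw [ih c hc, mul_zero]
    · have : cK m π p c = 0 := by rw [cK, if_pos hp, if_neg hc]
      rw [this, zero_mul]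
def chi : Fin m × Fin m → ℝ := fun p => if p.1 = p.2 then 0 else 1

lemma chi_nonneg (p : Fin m × Fin m) : 0 ≤ chi p := by
  rw [chi]; split_ifs <;> norm_num

lemma chi_le_one (p : Fin m × Fin m) : chi p ≤ 1 := by
  rw [chi]; split_ifs <;> norm_num

noncomputable def uu (m : ℕ) (π : ℕ → ℝ) (s : ℕ) (p : Fin m × Fin m) : ℝ :=
  ∑ p' : Fin m × Fin m, ((cK m π)^s) p p' * chi p'

lemma uu_zero (p : Fin m × Fin m) : uu m π 0 p = chi p := by
  rw [uu, pow_zero]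
  exact sum_one_mul p chi

lemma uu_nonneg (h1 : Hpos m π) (h2 : Hzero m π) (s : ℕ) (p : Fin m × Fin m) :
    0 ≤ uu m π s p :=
  Finset.sum_nonneg fun p' _ => mul_nonneg (cKpow_nonneg h1 h2 s p p') (chi_nonneg p')

lemma uu_le_one (h1 : Hpos m π) (h2 : Hzero m π) (s : ℕ) (p : Fin m × Fin m) :
    uu m π s p ≤ 1 := by
  have : uu m π s p ≤ ∑ p' : Fin m × Fin m, ((cK m π)^s) p p' := by
    apply Finset.sum_le_sum
    intro p' _
    calc ((cK m π)^s) p p' * chi p' ≤ ((cK m π)^s) p p' * 1 :=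
          mul_le_mul_of_nonneg_left (chi_le_one p') (cKpow_nonneg h1 h2 s p p')
      _ = ((cK m π)^s) p p' := mul_one _
  rw [cKpow_rowsum h2 s p] at this
  exact this

lemma uu_diag (h1 : Hpos m π) (h2 : Hzero m π) (s : ℕ) (p : Fin m × Fin m)
    (hp : p.1 = p.2) : uu m π s p = 0 := by
  apply Finset.sum_eq_zero
  intro p' _
  by_cases hp' : p'.1 = p'.2
  · rw [chi, if_pos hp', mul_zero]
  · rw [cKpow_absorb s p p' hp hp', zero_mul]

lemma uu_add (s t : ℕ) (p : Fin m × Fin m) :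
    uu m π (s + t) p = ∑ c : Fin m × Fin m, ((cK m π)^s) p c * uu m π t c := by
  rw [uu, pow_add]
  have e1 : ∀ p' : Fin m × Fin m, ((cK m π)^s * (cK m π)^t) p p' * chi p'
      = ∑ c : Fin m × Fin m, ((cK m π)^s) p c * ((cK m π)^t) c p' * chi p' := by
    intro p'
    rw [Matrix.mul_apply, Finset.sum_mul]
  rw [Finset.sum_congr rfl (fun p' _ => e1 p'), Finset.sum_comm]
  apply Finset.sum_congr rfl
  intro c _
  rw [uu, Finset.mul_sum]
  apply Finset.sum_congr rfl
  intro p' _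
  ring

lemma sum_mono_vec (h1 : Hpos m π) (h2 : Hzero m π) (s : ℕ) (p : Fin m × Fin m)
    (v w : Fin m × Fin m → ℝ) (h : ∀ c, v c ≤ w c) :
    ∑ c : Fin m × Fin m, ((cK m π)^s) p c * v c
      ≤ ∑ c : Fin m × Fin m, ((cK m π)^s) p c * w c :=
  Finset.sum_le_sum fun c _ =>
    mul_le_mul_of_nonneg_left (h c) (cKpow_nonneg h1 h2 s p c)

lemma uu_antitone (h1 : Hpos m π) (h2 : Hzero m π) :
    ∀ s t : ℕ, s ≤ t → ∀ p : Fin m × Fin m, uu m π t p ≤ uu m π s p := by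
  have step : ∀ s : ℕ, ∀ p : Fin m × Fin m, uu m π (s+1) p ≤ uu m π s p := by
    intro s p
    rw [uu_add s 1]
    have : ∀ c : Fin m × Fin m, uu m π 1 c ≤ chi c := by
      intro c
      by_cases hc : c.1 = c.2
      · rw [uu_diag h1 h2 1 c hc, chi, if_pos hc]
      · rw [chi, if_neg hc]; exact uu_le_one h1 h2 1 c
    calc ∑ c : Fin m × Fin m, ((cK m π)^s) p c * uu m π 1 c
        ≤ ∑ c : Fin m × Fin m, ((cK m π)^s) p c * chi c :=
          sum_mono_vec h1 h2 s p _ _ this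
      _ = uu m π s p := rfl
  intro s t hst p
  induction t, hst using Nat.le_induction with
  | base => exact le_refl _
  | succ t hst ih => exact le_trans (step t p) ih
def dd (p : Fin m × Fin m) : ℕ := ((p.1:ℕ) - (p.2:ℕ)) + ((p.2:ℕ) - (p.1:ℕ))

noncomputable def gR (m : ℕ) (k : ℕ) : ℝ := (k:ℝ) * (2*(m:ℝ) - (k:ℝ))

noncomputable def Hv (m : ℕ) : Fin m × Fin m → ℝ := fun p => gR m (dd p)

lemma dd_le (p : Fin m × Fin m) : dd p ≤ m := by
  have := p.1.isLt; have := p.2.isLt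
  rw [dd]; omega

lemma gR_nonneg (k : ℕ) (hk : k ≤ m) : 0 ≤ gR m k := by
  rw [gR]
  have h1 : (0:ℝ) ≤ (k:ℝ) := Nat.cast_nonneg k
  have h2 : (k:ℝ) ≤ (m:ℝ) := Nat.cast_le.mpr hk
  nlinarith

lemma Hv_nonneg (p : Fin m × Fin m) : 0 ≤ Hv m p := gR_nonneg _ (dd_le p)

lemma Hv_le (p : Fin m × Fin m) : Hv m p ≤ (m:ℝ)^2 := by
  rw [Hv, gR]
  have h1 : (0:ℝ) ≤ (dd p : ℝ) := Nat.cast_nonneg _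
  have h2 : ((dd p :ℕ):ℝ) ≤ (m:ℝ) := Nat.cast_le.mpr (dd_le p)
  nlinarith

lemma Hv_diag (x : Fin m) : Hv m (x, x) = 0 := by
  have : dd (x, x) = 0 := by rw [dd]; dsimp only; omega
  rw [Hv, this, gR]
  norm_num

lemma Hv_swap (x y : Fin m) : Hv m (x, y) = Hv m (y, x) := by
  have : dd (x, y) = dd (y, x) := by rw [dd, dd]; dsimp only; omega
  rw [Hv, Hv, this]

lemma drift_lt (hm : 1 ≤ m) (h1 : Hpos m π) (h2 : Hzero m π) (hlc : Hlc m π)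
    (x y : Fin m) (hxy : (x:ℕ) < (y:ℕ)) :
    ∑ p' : Fin m × Fin m, cK m π (x,y) p' * Hv m p'
      ≤ Hv m (x,y) - (1/2) * min 1 (rmin m π hm) := by
  have hne : x ≠ y := fun hc => absurd (congrArg Fin.val hc) (by omega)
  set d : ℕ := (y:ℕ) - (x:ℕ) with hd
  have hd1 : 1 ≤ d := by omega
  have hdm : d + 1 ≤ m := by have := y.isLt; omega
  rw [cK_row (x,y) hne (Hv m)]
  dsimp only
  rw [P_row h2 x (fun a => Hv m (a, y)), P_row h2 y (fun b => Hv m (x, b))]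
  have hvxy : Hv m (x,y) = gR m d := by
    rw [Hv]; congr 1; rw [dd]; dsimp only; omega
  have hsx : Hv m (fsucc x, y) = gR m (d-1) := by
    have hlt : (x:ℕ)+1 < m := by have := y.isLt; omega
    rw [Hv]; congr 1; rw [dd]; dsimp only; rw [fsucc_val x hlt]; omega
  have hpy : Hv m (x, fpred y) = gR m (d-1) := by
    rw [Hv]; congr 1; rw [dd]; dsimp only; rw [fpred_val]; omega
  have hpx : Df π x * (Hv m (fpred x, y) - Hv m (x, y))
      = Df π x * (gR m (d+1) - gR m d) := by
    by_cases hx0 : 0 < (x:ℕ)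
    · have : Hv m (fpred x, y) = gR m (d+1) := by
        rw [Hv]; congr 1; rw [dd]; dsimp only; rw [fpred_val]; omega
      rw [this, hvxy]
    · rw [Df_boundary x h2 hx0, zero_mul, zero_mul]
  have hsy : Uf π y * (Hv m (x, fsucc y) - Hv m (x, y))
      = Uf π y * (gR m (d+1) - gR m d) := by
    by_cases hy1 : (y:ℕ)+1 < m
    · have : Hv m (x, fsucc y) = gR m (d+1) := by
        rw [Hv]; congr 1; rw [dd]; dsimp only; rw [fsucc_val y hy1]; omega
      rw [this, hvxy]
    · rw [Uf_boundary h2 y hy1, zero_mul, zero_mul]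
  rw [hsx, hpy, hpx, hsy, hvxy]
  -- cast facts
  have eA : gR m (d-1) = gR m d - (2*(m:ℝ) - 2*(d:ℝ) + 1) := by
    rw [gR, gR, Nat.cast_sub hd1]
    push_cast
    ring
  have eB : gR m (d+1) = gR m d + (2*(m:ℝ) - 2*(d:ℝ) - 1) := by
    rw [gR, gR]
    push_cast
    ring
  have hB : (0:ℝ) ≤ 2*(m:ℝ) - 2*(d:ℝ) - 1 := by
    have : (d:ℝ) + 1 ≤ (m:ℝ) := by exact_mod_cast Nat.cast_le.mpr hdm
    have hd1' : (1:ℝ) ≤ (d:ℝ) := by exact_mod_cast Nat.cast_le.mpr hd1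
    linarith
  have hUyx : Uf π y ≤ Uf π x := Uf_mono h1 h2 hlc x y hxy
  have hDxy : Df π x ≤ Df π y := Df_mono h1 h2 hlc x y hxy
  have hmx := move_ge hm h1 h2 x
  have hmy := move_ge hm h1 h2 y
  have hS : (1/4) * min 1 (rmin m π hm) ≤ Uf π x + Df π y := by linarith
  have hprod : (Df π x + Uf π y) * (2*(m:ℝ) - 2*(d:ℝ) - 1)
      ≤ (Uf π x + Df π y) * (2*(m:ℝ) - 2*(d:ℝ) - 1) :=
    mul_le_mul_of_nonneg_right (by linarith) hB
  rw [eA, eB]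
  nlinarith [hprod, hS]

lemma drift (hm : 1 ≤ m) (h1 : Hpos m π) (h2 : Hzero m π) (hlc : Hlc m π)
    (p : Fin m × Fin m) :
    ∑ p' : Fin m × Fin m, cK m π p p' * Hv m p'
      ≤ Hv m p - ((1/2) * min 1 (rmin m π hm)) * chi p := by
  obtain ⟨x, y⟩ := p
  rcases lt_trichotomy (x:ℕ) (y:ℕ) with h | h | h
  · have hne : x ≠ y := fun hc => absurd (congrArg Fin.val hc) (by omega)
    have hchi : chi (x,y) = 1 := by rw [chi, if_neg hne]
    rw [hchi, mul_one]
    exact drift_lt hm h1 h2 hlc x y h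
  · have hxy : x = y := Fin.ext h
    subst hxy
    have hchi : chi (x,x) = 0 := by rw [chi, if_pos rfl]
    rw [hchi, mul_zero, Hv_diag, cK_diag_row (x,x) rfl (Hv m)]
    dsimp only
    have : ∀ a : Fin m, bdChain m π x a * Hv m (a, a) = 0 := by
      intro a; rw [Hv_diag, mul_zero]
    rw [Finset.sum_congr rfl (fun a _ => this a), Finset.sum_const_zero]
    norm_num
  · have hne : x ≠ y := fun hc => absurd (congrArg Fin.val hc) (by omega)
    have hyx : y ≠ x := fun hc => hne hc.symm
    have e : ∑ p' : Fin m × Fin m, cK m π (x,y) p' * Hv m p'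
        = ∑ q : Fin m × Fin m, cK m π (y,x) q * Hv m q := by
      apply Fintype.sum_equiv (Equiv.prodComm (Fin m) (Fin m))
      intro q
      obtain ⟨u, v⟩ := q
      rw [cK_swap x y u v, Hv_swap u v]
      rfl
    have hchi : chi (x,y) = 1 := by simp [chi, hne]
    rw [e, hchi, mul_one, Hv_swap x y]
    exact drift_lt hm h1 h2 hlc y x h
lemma W_le (hm : 1 ≤ m) (h1 : Hpos m π) (h2 : Hzero m π) (hlc : Hlc m π)
    (s : ℕ) (p : Fin m × Fin m) :
    ∑ p' : Fin m × Fin m, ((cK m π)^s) p p' * Hv m p'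
      ≤ Hv m p - ((1/2) * min 1 (rmin m π hm)) * ∑ t ∈ Finset.range s, uu m π t p := by
  induction s generalizing p with
  | zero =>
    rw [pow_zero, sum_one_mul p (Hv m)]
    simp
  | succ s ih =>
    have e0 : ∀ p' : Fin m × Fin m, ((cK m π)^(s+1)) p p' * Hv m p'
        = ∑ c : Fin m × Fin m, cK m π p c * (((cK m π)^s) c p' * Hv m p') := by
      intro p'
      rw [pow_succ', Matrix.mul_apply, Finset.sum_mul]
      apply Finset.sum_congr rfl
      intro c _
      ring
    rw [Finset.sum_congr rfl (fun p' _ => e0 p'), Finset.sum_comm]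
    have e1 : ∀ c : Fin m × Fin m,
        ∑ p' : Fin m × Fin m, cK m π p c * (((cK m π)^s) c p' * Hv m p')
          = cK m π p c * ∑ p' : Fin m × Fin m, ((cK m π)^s) c p' * Hv m p' := by
      intro c; rw [Finset.mul_sum]
    rw [Finset.sum_congr rfl (fun c _ => e1 c)]
    have step1 : ∑ c : Fin m × Fin m,
          cK m π p c * ∑ p' : Fin m × Fin m, ((cK m π)^s) c p' * Hv m p'
        ≤ ∑ c : Fin m × Fin m, cK m π p c *
            (Hv m c - ((1/2) * min 1 (rmin m π hm)) * ∑ t ∈ Finset.range s, uu m π t c) :=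
      Finset.sum_le_sum fun c _ =>
        mul_le_mul_of_nonneg_left (ih c) (cK_nonneg h1 h2 p c)
    refine le_trans step1 ?_
    have expand : ∑ c : Fin m × Fin m, cK m π p c *
          (Hv m c - ((1/2) * min 1 (rmin m π hm)) * ∑ t ∈ Finset.range s, uu m π t c)
        = (∑ c : Fin m × Fin m, cK m π p c * Hv m c)
          - ((1/2) * min 1 (rmin m π hm)) *
            ∑ t ∈ Finset.range s, ∑ c : Fin m × Fin m, cK m π p c * uu m π t c := by
      rw [Finset.sum_congr rfl (fun c _ => mul_sub (cK m π p c) (Hv m c)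
        (((1/2) * min 1 (rmin m π hm)) * ∑ t ∈ Finset.range s, uu m π t c)),
        Finset.sum_sub_distrib]
      congr 1
      calc ∑ c : Fin m × Fin m, cK m π p c *
              (((1/2) * min 1 (rmin m π hm)) * ∑ t ∈ Finset.range s, uu m π t c)
          = ∑ c : Fin m × Fin m, ∑ t ∈ Finset.range s,
              ((1/2) * min 1 (rmin m π hm)) * (cK m π p c * uu m π t c) := by
            apply Finset.sum_congr rfl
            intro c _
            rw [Finset.mul_sum, Finset.mul_sum]
            apply Finset.sum_congr rfl
            intro t _
            ring
        _ = ∑ t ∈ Finset.range s, ∑ c : Fin m × Fin m,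
              ((1/2) * min 1 (rmin m π hm)) * (cK m π p c * uu m π t c) :=
            Finset.sum_comm
        _ = ((1/2) * min 1 (rmin m π hm)) *
              ∑ t ∈ Finset.range s, ∑ c : Fin m × Fin m, cK m π p c * uu m π t c := by
            rw [Finset.mul_sum]
            apply Finset.sum_congr rfl
            intro t _
            rw [Finset.mul_sum]
    rw [expand]
    have euu : ∀ t : ℕ, ∑ c : Fin m × Fin m, cK m π p c * uu m π t c = uu m π (t+1) p := by
      intro t
      have := uu_add (m := m) (π := π) 1 t p
      rw [Nat.add_comm 1 t] at this
      rw [this]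
      apply Finset.sum_congr rfl
      intro c _
      rw [pow_one]
    rw [Finset.sum_congr rfl (fun t _ => euu t)]
    have hdr := drift hm h1 h2 hlc p
    have hrange : ∑ t ∈ Finset.range (s+1), uu m π t p
        = (∑ t ∈ Finset.range s, uu m π (t+1) p) + uu m π 0 p :=
      Finset.sum_range_succ' (fun t => uu m π t p) s
    rw [hrange, uu_zero p]
    have hmin0 : (0:ℝ) ≤ (1/2) * min 1 (rmin m π hm) → True := fun _ => trivial
    nlinarith [hdr]

lemma uu_poly (hm : 1 ≤ m) (h1 : Hpos m π) (h2 : Hzero m π) (hlc : Hlc m π)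
    (s : ℕ) (p : Fin m × Fin m) :
    ((1/2) * min 1 (rmin m π hm)) * ((s:ℝ)+1) * uu m π s p ≤ (m:ℝ)^2 := by
  have hW : 0 ≤ ∑ p' : Fin m × Fin m, ((cK m π)^(s+1)) p p' * Hv m p' :=
    Finset.sum_nonneg fun p' _ =>
      mul_nonneg (cKpow_nonneg h1 h2 _ p p') (Hv_nonneg p')
  have hle := W_le hm h1 h2 hlc (s+1) p
  have hsum : ((1/2) * min 1 (rmin m π hm)) * ∑ t ∈ Finset.range (s+1), uu m π t p ≤ (m:ℝ)^2 := by
    have := Hv_le (m := m) p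
    linarith
  have hsum2 : ((s:ℝ)+1) * uu m π s p ≤ ∑ t ∈ Finset.range (s+1), uu m π t p := by
    have : ∀ t ∈ Finset.range (s+1), uu m π s p ≤ uu m π t p := by
      intro t ht
      rw [Finset.mem_range] at ht
      exact uu_antitone h1 h2 t s (by omega) p
    calc ((s:ℝ)+1) * uu m π s p = ∑ _t ∈ Finset.range (s+1), uu m π s p := by
          rw [Finset.sum_const, Finset.card_range]
          push_cast
          ring
      _ ≤ ∑ t ∈ Finset.range (s+1), uu m π t p := Finset.sum_le_sum this
  have hδ0 : 0 ≤ (1/2) * min 1 (rmin m π hm) := delta_nonneg hm h1 h2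
  calc ((1/2) * min 1 (rmin m π hm)) * ((s:ℝ)+1) * uu m π s p = ((1/2) * min 1 (rmin m π hm)) * (((s:ℝ)+1) * uu m π s p) := by ring
    _ ≤ ((1/2) * min 1 (rmin m π hm)) * ∑ t ∈ Finset.range (s+1), uu m π t p :=
        mul_le_mul_of_nonneg_left hsum2 hδ0
    _ ≤ (m:ℝ)^2 := hsum
lemma uu_half (hm : 1 ≤ m) (h1 : Hpos m π) (h2 : Hzero m π) (hlc : Hlc m π)
    (s0 : ℕ) (hs0 : 2*(m:ℝ)^2 ≤ ((1/2) * min 1 (rmin m π hm)) * ((s0:ℝ)+1))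
    (p : Fin m × Fin m) :
    uu m π s0 p ≤ (1/2) * chi p := by
  by_cases hp : p.1 = p.2
  · rw [uu_diag h1 h2 s0 p hp, chi, if_pos hp, mul_zero]
  · rw [chi, if_neg hp, mul_one]
    have hpoly := uu_poly hm h1 h2 hlc s0 p
    have hm2 : (0:ℝ) < (m:ℝ)^2 := by
      have : (1:ℝ) ≤ (m:ℝ) := by exact_mod_cast hm
      nlinarith
    have hupos := uu_nonneg h1 h2 s0 p
    have huble := uu_le_one h1 h2 s0 p
    nlinarith [mul_le_mul_of_nonneg_right hs0 hupos]

lemma uu_geom (hm : 1 ≤ m) (h1 : Hpos m π) (h2 : Hzero m π) (hlc : Hlc m π)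
    (s0 : ℕ) (hs0 : 2*(m:ℝ)^2 ≤ ((1/2) * min 1 (rmin m π hm)) * ((s0:ℝ)+1)) :
    ∀ k : ℕ, ∀ p : Fin m × Fin m, uu m π (k * s0) p ≤ (1/2)^k * chi p := by
  intro k
  induction k with
  | zero => intro p; rw [Nat.zero_mul, uu_zero, pow_zero, one_mul]
  | succ k ih =>
    intro p
    have hstep : (k+1) * s0 = k * s0 + s0 := by ring
    rw [hstep, uu_add (k*s0) s0 p]
    calc ∑ c : Fin m × Fin m, ((cK m π)^(k*s0)) p c * uu m π s0 c
        ≤ ∑ c : Fin m × Fin m, ((cK m π)^(k*s0)) p c * ((1/2) * chi c) :=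
          sum_mono_vec h1 h2 _ p _ _ (uu_half hm h1 h2 hlc s0 hs0)
      _ = (1/2) * uu m π (k*s0) p := by
          rw [uu, Finset.mul_sum]
          apply Finset.sum_congr rfl
          intro c _
          ring
      _ ≤ (1/2) * ((1/2)^k * chi p) := by
          have := ih p
          linarith
      _ = (1/2)^(k+1) * chi p := by ring

lemma sum_split_diag {α : Type*} [Fintype α] [DecidableEq α] (g : α → ℝ) (z : α) :
    ∑ b : α, g b = g z + ∑ b : α, (if b = z then 0 else g b) := by
  have point : ∀ b : α, g b = (if b = z then g b else 0) + (if b = z then 0 else g b) := by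
    intro b; by_cases h : b = z
    · rw [if_pos h, if_pos h, add_zero]
    · rw [if_neg h, if_neg h, zero_add]
  rw [Finset.sum_congr rfl (fun b _ => point b), Finset.sum_add_distrib,
    Finset.sum_ite_eq' Finset.univ z g, if_pos (Finset.mem_univ _)]

lemma coup_bound (h1 : Hpos m π) (h2 : Hzero m π) (s : ℕ) (x y : Fin m) :
    ∑ z : Fin m, |((bdChain m π)^s) x z - ((bdChain m π)^s) y z|
      ≤ 2 * uu m π s (x,y) := by
  have hA : ∀ z : Fin m, ((bdChain m π)^s) x z
      = ((cK m π)^s) (x,y) (z,z) + ∑ b : Fin m, (if b = z then 0 else ((cK m π)^s) (x,y) (z,b)) := by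
    intro z
    have := cKpow_marg1 h2 s (x,y) z
    dsimp only at this
    rw [← this, sum_split_diag (fun b => ((cK m π)^s) (x,y) (z,b)) z]
  have hB : ∀ z : Fin m, ((bdChain m π)^s) y z
      = ((cK m π)^s) (x,y) (z,z) + ∑ a : Fin m, (if a = z then 0 else ((cK m π)^s) (x,y) (a,z)) := by
    intro z
    have := cKpow_marg2 h2 s (x,y) z
    dsimp only at this
    rw [← this, sum_split_diag (fun a => ((cK m π)^s) (x,y) (a,z)) z]
  have habs : ∀ z : Fin m, |((bdChain m π)^s) x z - ((bdChain m π)^s) y z|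
      ≤ (∑ b : Fin m, (if b = z then 0 else ((cK m π)^s) (x,y) (z,b)))
        + ∑ a : Fin m, (if a = z then 0 else ((cK m π)^s) (x,y) (a,z)) := by
    intro z
    rw [hA z, hB z]
    have hA0 : 0 ≤ ∑ b : Fin m, (if b = z then 0 else ((cK m π)^s) (x,y) (z,b)) :=
      Finset.sum_nonneg fun b _ => by
        split_ifs
        · exact le_refl 0
        · exact cKpow_nonneg h1 h2 s _ _
    have hB0 : 0 ≤ ∑ a : Fin m, (if a = z then 0 else ((cK m π)^s) (x,y) (a,z)) :=
      Finset.sum_nonneg fun a _ => by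
        split_ifs
        · exact le_refl 0
        · exact cKpow_nonneg h1 h2 s _ _
    rw [abs_le]
    constructor <;> [skip; skip] <;> · ring_nf; linarith
  calc ∑ z : Fin m, |((bdChain m π)^s) x z - ((bdChain m π)^s) y z|
      ≤ ∑ z : Fin m, ((∑ b : Fin m, (if b = z then 0 else ((cK m π)^s) (x,y) (z,b)))
          + ∑ a : Fin m, (if a = z then 0 else ((cK m π)^s) (x,y) (a,z))) :=
        Finset.sum_le_sum (fun z _ => habs z)
    _ = (∑ z : Fin m, ∑ b : Fin m, (if b = z then 0 else ((cK m π)^s) (x,y) (z,b)))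
          + ∑ z : Fin m, ∑ a : Fin m, (if a = z then 0 else ((cK m π)^s) (x,y) (a,z)) :=
        Finset.sum_add_distrib
    _ = uu m π s (x,y) + uu m π s (x,y) := by
        congr 1
        · rw [uu, Fintype.sum_prod_type]
          apply Finset.sum_congr rfl
          intro z _
          apply Finset.sum_congr rfl
          intro b _
          rw [chi]
          dsimp only
          by_cases h : b = z
          · rw [if_pos h, if_pos h.symm, mul_zero]
          · rw [if_neg h, if_neg (fun hc => h hc.symm), mul_one]
        · rw [uu, Fintype.sum_prod_type, Finset.sum_comm]
          apply Finset.sum_congr rfl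
          intro a _
          apply Finset.sum_congr rfl
          intro z _
          rw [chi]
          dsimp only
          by_cases h : a = z
          · rw [if_pos h, if_pos h, mul_zero]
          · rw [if_neg h, if_neg h, mul_one]
    _ = 2 * uu m π s (x,y) := by ring

lemma stationary_pow (h1 : Hpos m π) (h2 : Hzero m π) (s : ℕ) (z : Fin m) :
    ∑ y : Fin m, π ((y:ℕ)+1) * ((bdChain m π)^s) y z = π ((z:ℕ)+1) := by
  induction s generalizing z with
  | zero =>
    rw [pow_zero]
    rw [Finset.sum_eq_single z]
    · rw [Matrix.one_apply_eq, mul_one]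
    · intro y _ hy; rw [Matrix.one_apply_ne hy, mul_zero]
    · intro h; exact absurd (Finset.mem_univ _) h
  | succ s ih =>
    have e : ∀ y : Fin m, π ((y:ℕ)+1) * ((bdChain m π)^(s+1)) y z
        = ∑ c : Fin m, (π ((y:ℕ)+1) * ((bdChain m π)^s) y c) * bdChain m π c z := by
      intro y
      rw [pow_succ, Matrix.mul_apply, Finset.mul_sum]
      apply Finset.sum_congr rfl
      intro c _
      ring
    rw [Finset.sum_congr rfl (fun y _ => e y), Finset.sum_comm]
    have e2 : ∀ c : Fin m,
        ∑ y : Fin m, (π ((y:ℕ)+1) * ((bdChain m π)^s) y c) * bdChain m π c z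
          = π ((c:ℕ)+1) * bdChain m π c z := by
      intro c
      rw [← Finset.sum_mul, ih c]
    rw [Finset.sum_congr rfl (fun c _ => e2 c)]
    exact stationary h1 h2 z

lemma piF_sum (hsum : ∑ i ∈ Finset.Icc 1 m, π i = 1) :
    ∑ y : Fin m, π ((y:ℕ)+1) = 1 := by
  rw [Fin.sum_univ_eq_sum_range (fun i => π (i+1)) m]
  rw [← Finset.Ico_add_one_right_eq_Icc, Finset.sum_Ico_eq_sum_range] at hsum
  simpa [Nat.add_comm] using hsum
lemma tv_bound (hm : 1 ≤ m) (h1 : Hpos m π) (h2 : Hzero m π) (hlc : Hlc m π)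
    (hsum : ∑ i ∈ Finset.Icc 1 m, π i = 1)
    (s0 : ℕ) (hs0 : 2*(m:ℝ)^2 ≤ ((1/2) * min 1 (rmin m π hm)) * ((s0:ℝ)+1))
    (k s : ℕ) (hks : k * s0 ≤ s) (x : Fin m) :
    (1/2) * ∑ z : Fin m, |((bdChain m π)^s) x z - π ((z:ℕ)+1)| ≤ (1/2)^k := by
  have key : ∀ z : Fin m, |((bdChain m π)^s) x z - π ((z:ℕ)+1)|
      ≤ ∑ y : Fin m, π ((y:ℕ)+1) * |((bdChain m π)^s) x z - ((bdChain m π)^s) y z| := by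
    intro z
    have e : ∑ y : Fin m, π ((y:ℕ)+1) * (((bdChain m π)^s) x z - ((bdChain m π)^s) y z)
        = ((bdChain m π)^s) x z - π ((z:ℕ)+1) := by
      rw [Finset.sum_congr rfl (fun (y : Fin m) _ => mul_sub (π ((y:ℕ)+1))
          (((bdChain m π)^s) x z) (((bdChain m π)^s) y z)),
        Finset.sum_sub_distrib, ← Finset.sum_mul, piF_sum hsum, one_mul,
        stationary_pow h1 h2 s z]
    rw [← e]
    refine le_trans (Finset.abs_sum_le_sum_abs _ _) ?_
    apply Finset.sum_le_sum
    intro y _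
    rw [abs_mul, abs_of_nonneg (pi_nonneg h1 h2 _)]
  have inner : ∀ y : Fin m,
      ∑ z : Fin m, |((bdChain m π)^s) x z - ((bdChain m π)^s) y z| ≤ 2 * (1/2)^k := by
    intro y
    have hc := coup_bound h1 h2 s x y
    have hu1 : uu m π s (x,y) ≤ uu m π (k*s0) (x,y) := uu_antitone h1 h2 (k*s0) s hks _
    have hu2 : uu m π (k*s0) (x,y) ≤ (1/2)^k * chi (x,y) := uu_geom hm h1 h2 hlc s0 hs0 k _
    have hu3 : (1/2:ℝ)^k * chi (x,y) ≤ (1/2)^k := by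
      have hp : (0:ℝ) ≤ (1/2)^k := by positivity
      nlinarith [chi_le_one (m := m) (x,y)]
    linarith
  have main : ∑ z : Fin m, |((bdChain m π)^s) x z - π ((z:ℕ)+1)| ≤ 2 * (1/2)^k := by
    calc ∑ z : Fin m, |((bdChain m π)^s) x z - π ((z:ℕ)+1)|
        ≤ ∑ z : Fin m, ∑ y : Fin m,
            π ((y:ℕ)+1) * |((bdChain m π)^s) x z - ((bdChain m π)^s) y z| :=
          Finset.sum_le_sum (fun z _ => key z)
      _ = ∑ y : Fin m, ∑ z : Fin m,
            π ((y:ℕ)+1) * |((bdChain m π)^s) x z - ((bdChain m π)^s) y z| :=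
          Finset.sum_comm
      _ = ∑ y : Fin m, π ((y:ℕ)+1) *
            ∑ z : Fin m, |((bdChain m π)^s) x z - ((bdChain m π)^s) y z| := by
          apply Finset.sum_congr rfl
          intro y _
          rw [Finset.mul_sum]
      _ ≤ ∑ y : Fin m, π ((y:ℕ)+1) * (2 * (1/2)^k) :=
          Finset.sum_le_sum (fun y _ =>
            mul_le_mul_of_nonneg_left (inner y) (pi_nonneg h1 h2 _))
      _ = 2 * (1/2)^k := by rw [← Finset.sum_mul, piF_sum hsum, one_mul]
  linarith

end BD

/-- Let `π` be a probability distribution on `{1, …, m}`,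
positive there and vanishing outside (in particular `π(0) = π(m+1) = 0`), which
is log-concave: `π(i-1)π(i+1) ≤ π(i)²` for `1 ≤ i ≤ m`. Let `M` be the
Metropolis birth-death chain for `π` and let
`r = min_{1 ≤ i ≤ m} (π(i-1) + π(i+1))/π(i)`. Then there is a universal
constant `C` such that `τ(ε) ≤ C (m²/r) log(1/ε)` for every `ε ∈ (0, 1/2)`. -/
theorem bdChain_mixing_time :
    ∃ C : ℝ, 0 < C ∧
      ∀ (m : ℕ) (hm : 1 ≤ m) (π : ℕ → ℝ),
        (∀ i : ℕ, 1 ≤ i → i ≤ m → 0 < π i) →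
        (∀ i : ℕ, i = 0 ∨ m < i → π i = 0) →
        (∑ i ∈ Finset.Icc 1 m, π i = 1) →
        (∀ i : ℕ, 1 ≤ i → i ≤ m → π (i - 1) * π (i + 1) ≤ (π i) ^ 2) →
        ∀ ε : ℝ, 0 < ε → ε < 1/2 →
          (mixingTime (bdChain m π) (fun i => π ((i : ℕ) + 1)) ε : ℝ) ≤
            C * ((m : ℝ) ^ 2 /
                ((Finset.Icc 1 m).inf' (Finset.nonempty_Icc.mpr hm)
                  (fun i => (π (i - 1) + π (i + 1)) / π i))) *
              Real.log (1 / ε) := by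
  have hlog2 : 0 < Real.log 2 := Real.log_pos (by norm_num)
  refine ⟨20 / Real.log 2, by positivity, ?_⟩
  intro m hm π h1 h2 hsum hlc ε hε0 hε2
  have hL2 : Real.log 2 < Real.log (1/ε) := by
    apply Real.log_lt_log (by norm_num)
    rw [lt_div_iff₀ hε0]
    linarith
  have hL0 : 0 < Real.log (1/ε) := lt_trans hlog2 hL2
  set k : ℕ := Nat.floor (Real.log (1/ε) / Real.log 2) + 1 with hkdef
  have hfloor : Real.log (1/ε) / Real.log 2 < (k:ℝ) := by
    rw [hkdef]
    push_cast
    exact Nat.lt_floor_add_one _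
  have hklog : Real.log (1/ε) < (k:ℝ) * Real.log 2 := by
    rw [div_lt_iff₀ hlog2] at hfloor
    linarith
  have h2k : 1/ε < 2^k := by
    have hlogpow : Real.log (1/ε) < Real.log ((2:ℝ)^k) := by
      rw [Real.log_pow]
      exact_mod_cast hklog
    exact (Real.log_lt_log_iff (by positivity) (by positivity)).mp hlogpow
  have hk2 : (1/2:ℝ)^k < ε := by
    have hpow : (0:ℝ) < 2^k := by positivity
    rw [div_pow, one_pow, div_lt_iff₀ hpow]
    rw [div_lt_iff₀ hε0] at h2k
    linarith
  rcases Nat.lt_or_ge m 2 with hm1 | hm2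
  -- degenerate case m = 1
  · have hmeq : m = 1 := by omega
    subst hmeq
    have hpi1 : π 1 = 1 := by simpa using hsum
    have hPid : bdChain 1 π = 1 := by
      ext i j
      have hij : i = j := Subsingleton.elim i j
      subst hij
      rw [bdChain, if_pos rfl, Matrix.one_apply_eq]
      have hz : ∀ l : Fin 1, (if l = i then (0:ℝ) else
          if (i:ℕ)+1 = (l:ℕ) ∨ (l:ℕ)+1 = (i:ℕ) then
            (1/4) * min 1 (π ((l:ℕ)+1)/π ((i:ℕ)+1)) else 0) = 0 :=
        fun l => by rw [if_pos (Subsingleton.elim l i)]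
      rw [Finset.sum_congr rfl (fun l _ => hz l), Finset.sum_const_zero]
      norm_num
    have hmix : mixingTime (bdChain 1 π) (fun i => π ((i:ℕ)+1)) ε = 0 := by
      have h0 : 0 ∈ {t : ℕ | ∀ s : ℕ, t ≤ s → ∀ x : Fin 1,
          (1/2) * ∑ y : Fin 1, |((bdChain 1 π) ^ s) x y - π ((y:ℕ)+1)| < ε} := by
        intro s _ x
        have hzz : ∀ z : Fin 1, |((bdChain 1 π)^s) x z - π ((z:ℕ)+1)| = 0 := by
          intro z
          have hxz : x = z := Subsingleton.elim x z
          have hz1 : (z:ℕ)+1 = 1 := by have := z.isLt; omega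
          rw [hPid, one_pow, hxz, Matrix.one_apply_eq, hz1, hpi1, sub_self, abs_zero]
        rw [Finset.sum_congr rfl (fun z _ => hzz z), Finset.sum_const_zero, mul_zero]
        exact hε0
      have := Nat.sInf_le h0
      rw [mixingTime]
      omega
    rw [hmix]
    have hf1 : (π (1-1) + π (1+1)) / π 1 = 0 := by
      have e0 : π 0 = 0 := h2 0 (Or.inl rfl)
      have e2 : π 2 = 0 := h2 2 (Or.inr (by norm_num))
      norm_num [e0, e2]
    have hinf : (Finset.Icc 1 1).inf' (Finset.nonempty_Icc.mpr hm)
        (fun i => (π (i - 1) + π (i + 1)) / π i) = 0 := by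
      apply le_antisymm
      · exact le_trans (Finset.inf'_le _ (by simp)) (le_of_eq hf1)
      · apply Finset.le_inf'
        intro b hb
        rw [Finset.mem_Icc] at hb
        have : b = 1 := by omega
        subst this
        rw [hf1]
    rw [hinf, div_zero, mul_zero, zero_mul, Nat.cast_zero]
  -- main case m ≥ 2
  · have h1' : BD.Hpos m π := h1
    have h2' : BD.Hzero m π := h2
    have hlc' : BD.Hlc m π := hlc
    have hrpos : 0 < BD.rmin m π hm := BD.rmin_pos hm hm2 h1' h2'
    have hr2 : BD.rmin m π hm ≤ 2 := BD.rmin_le_two hm h1' h2'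
    have hminpos : 0 < min 1 (BD.rmin m π hm) := lt_min one_pos hrpos
    have hδpos : 0 < (1/2) * min 1 (BD.rmin m π hm) := by linarith
    set s0 : ℕ := Nat.ceil (2*(m:ℝ)^2 / ((1/2) * min 1 (BD.rmin m π hm))) with hs0def
    have hs0 : 2*(m:ℝ)^2 ≤ ((1/2) * min 1 (BD.rmin m π hm)) * ((s0:ℝ)+1) := by
      have hc : 2*(m:ℝ)^2 / ((1/2) * min 1 (BD.rmin m π hm)) ≤ (s0:ℝ) := Nat.le_ceil _
      rw [div_le_iff₀ hδpos] at hc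
      nlinarith
    have hmem : (k * s0) ∈ {t : ℕ | ∀ s : ℕ, t ≤ s → ∀ x : Fin m,
        (1/2) * ∑ y : Fin m, |((bdChain m π) ^ s) x y - π ((y:ℕ)+1)| < ε} := by
      intro s hs x
      exact lt_of_le_of_lt (BD.tv_bound hm h1' h2' hlc' hsum s0 hs0 k s hs x) hk2
    have hle : mixingTime (bdChain m π) (fun i => π ((i:ℕ)+1)) ε ≤ k * s0 := by
      rw [mixingTime]
      exact Nat.sInf_le hmem
    have hcast : (mixingTime (bdChain m π) (fun i => π ((i:ℕ)+1)) ε : ℝ)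
        ≤ (k:ℝ) * (s0:ℝ) := by
      calc (mixingTime (bdChain m π) (fun i => π ((i:ℕ)+1)) ε : ℝ)
          ≤ ((k * s0 : ℕ) : ℝ) := Nat.cast_le.mpr hle
        _ = (k:ℝ) * (s0:ℝ) := by push_cast; ring
    -- numeric bounds
    have hkR : (k:ℝ) ≤ Real.log (1/ε) / Real.log 2 + 1 := by
      rw [hkdef]
      push_cast
      have := Nat.floor_le (show (0:ℝ) ≤ Real.log (1/ε) / Real.log 2 by positivity)
      linarith
    have hk2R : (k:ℝ) ≤ 2 * (Real.log (1/ε) / Real.log 2) := by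
      have : (1:ℝ) ≤ Real.log (1/ε) / Real.log 2 := (one_le_div hlog2).mpr hL2.le
      linarith
    have hs0R : (s0:ℝ) ≤ 2*(m:ℝ)^2 / ((1/2) * min 1 (BD.rmin m π hm)) + 1 := by
      rw [hs0def]
      exact le_of_lt (Nat.ceil_lt_add_one (by positivity))
    have hδge : BD.rmin m π hm / 4 ≤ (1/2) * min 1 (BD.rmin m π hm) := by
      rcases le_total (BD.rmin m π hm) 1 with h | h
      · rw [min_eq_right h]; linarith
      · rw [min_eq_left h]; linarith
    have hfrac : 2*(m:ℝ)^2 / ((1/2) * min 1 (BD.rmin m π hm))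
        ≤ 8 * ((m:ℝ)^2 / BD.rmin m π hm) := by
      have h4 : 0 < BD.rmin m π hm / 4 := by linarith
      calc 2*(m:ℝ)^2 / ((1/2) * min 1 (BD.rmin m π hm))
          ≤ 2*(m:ℝ)^2 / (BD.rmin m π hm / 4) := by
            apply div_le_div_of_nonneg_left (by positivity) h4 hδge
        _ = 8 * ((m:ℝ)^2 / BD.rmin m π hm) := by
            field_simp
            ring
    have hone : (1:ℝ) ≤ 2 * ((m:ℝ)^2 / BD.rmin m π hm) := by
      have hm1R : (1:ℝ) ≤ (m:ℝ) := by exact_mod_cast hm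
      rw [mul_div_assoc']
      rw [le_div_iff₀ hrpos]
      nlinarith
    have hs0R2 : (s0:ℝ) ≤ 10 * ((m:ℝ)^2 / BD.rmin m π hm) := by linarith
    have hfinal : (k:ℝ) * (s0:ℝ)
        ≤ (2 * (Real.log (1/ε) / Real.log 2)) * (10 * ((m:ℝ)^2 / BD.rmin m π hm)) := by
      apply mul_le_mul hk2R hs0R2 (Nat.cast_nonneg s0)
      positivity
    have heq : (2 * (Real.log (1/ε) / Real.log 2)) * (10 * ((m:ℝ)^2 / BD.rmin m π hm))
        = 20 / Real.log 2 * ((m:ℝ)^2 / BD.rmin m π hm) * Real.log (1/ε) := by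
      ring
    have hgoal : (mixingTime (bdChain m π) (fun i => π ((i:ℕ)+1)) ε : ℝ)
        ≤ 20 / Real.log 2 * ((m:ℝ)^2 / BD.rmin m π hm) * Real.log (1/ε) := by
      rw [← heq]
      exact le_trans hcast hfinal
    exact hgoal
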